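/- Let G = (S, r) be a ranked set with |S| = n and Tutte polynomial T(G; x, y) = ∑ b_{i,j} x^i y^j. Then ∑_{i=0}^{n} ∑_{j=0}^{n−i} (−1)^j C(n−i, j) b_{i,j} = (−1)^{n − r(S)}. -/

import Mathlib

open Finset

variable {α : Type*} [DecidableEq α]

/-- The generalized Tutte polynomial of a ranked set (S, r), as a polynomial
in x over polynomials in y; the coefficient b_{i,j} of x^i y^j is
((tutte S r).coeff i).coeff j. -/
noncomputable def tutte (S : Finset α) (r : Finset α → ℤ) : Polynomial (Polynomial ℤ) :=
  ∑ A ∈ S.powerset, (Polynomial.X - 1) ^ (r S - r A).toNat *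
    (Polynomial.C Polynomial.X - 1) ^ ((A.card : ℤ) - r A).toNat

section Helpers
open Polynomial


def Kk (a b n : ℕ) : ℤ :=
  ∑ i ∈ range (n+1), (-1)^i * (a.choose i) * ((n - i + b).choose b)

theorem Kk_succ_succ (a b n : ℕ) : Kk (a+1) (b+1) n = Kk a b n := by
  have key : Kk (a+1) (b+1) n - Kk a b n =
      ∑ i ∈ range (n+1), ((-1:ℤ)^i * ((a+1).choose i) * ((n - i + (b+1)).choose (b+1))
        - (-1:ℤ)^i * (a.choose i) * ((n - i + b).choose b)) := by
    rw [Kk, Kk, ← Finset.sum_sub_distrib]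
  set h : ℕ → ℤ := fun i => (-1)^i * (a.choose i) * ((n - i + b).choose (b+1)) with hh
  have step : ∀ i < n, ((-1:ℤ)^(i+1) * ((a+1).choose (i+1)) * ((n - (i+1) + (b+1)).choose (b+1))
        - (-1:ℤ)^(i+1) * (a.choose (i+1)) * ((n - (i+1) + b).choose b)) = h (i+1) - h i := by
    intro i hi
    have hm : n - (i+1) + (b+1) = (n - (i+1) + b) + 1 := by omega
    have hm2 : n - i + b = (n - (i+1) + b) + 1 := by omega
    simp only [hh]
    rw [hm, hm2]
    rw [Nat.choose_succ_succ (a) i, Nat.choose_succ_succ (n - (i+1) + b) b]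
    push_cast
    ring
  have h0 : ((-1:ℤ)^0 * ((a+1).choose 0) * ((n - 0 + (b+1)).choose (b+1))
        - (-1:ℤ)^0 * (a.choose 0) * ((n - 0 + b).choose b)) = h 0 := by
    simp only [hh]
    have : n - 0 + (b+1) = (n + b) + 1 := by omega
    rw [this]
    rw [Nat.choose_succ_succ (n+b) b]
    have : n - 0 + b = n + b := by omega
    rw [this]
    simp only [Nat.choose_zero_right, Nat.succ_eq_add_one]
    push_cast
    ring
  have key2 : ∑ i ∈ range (n+1), ((-1:ℤ)^i * ((a+1).choose i) * ((n - i + (b+1)).choose (b+1))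
        - (-1:ℤ)^i * (a.choose i) * ((n - i + b).choose b)) = h n := by
    rw [Finset.sum_range_succ']
    rw [h0]
    have : ∀ i ∈ range n, ((-1:ℤ)^(i+1) * ((a+1).choose (i+1)) * ((n - (i+1) + (b+1)).choose (b+1))
        - (-1:ℤ)^(i+1) * (a.choose (i+1)) * ((n - (i+1) + b).choose b)) = h (i+1) - h i := by
      intro i hi; exact step i (mem_range.mp hi)
    rw [Finset.sum_congr rfl this, Finset.sum_range_sub h]
    ring
  have hn : h n = 0 := by
    simp only [hh]
    have : n - n + b = b := by omega
    rw [this, Nat.choose_succ_self]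
    simp
  have := key.trans (key2.trans hn)
  linarith

theorem Kk_shift (c a b n : ℕ) : Kk (a+c) (b+c) n = Kk a b n := by
  induction c with
  | zero => rfl
  | succ c ih => rw [show a + (c+1) = (a+c)+1 by ring, show b + (c+1) = (b+c)+1 by ring,
      Kk_succ_succ, ih]

theorem Kk_zero_left (b n : ℕ) : Kk 0 b n = (n + b).choose b := by
  rw [Kk, Finset.sum_eq_single 0]
  · simp
  · intro i _ hi
    rcases Nat.exists_eq_succ_of_ne_zero hi with ⟨j, rfl⟩
    simp [Nat.choose_zero_succ]
  · simp

theorem alt_sum (a n : ℕ) :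
    ∑ i ∈ range (n+1), (-1:ℤ)^i * ((a+1).choose i) = (-1)^n * (a.choose n) := by
  induction n with
  | zero => simp
  | succ n ih =>
    rw [Finset.sum_range_succ, ih, Nat.choose_succ_succ a n]
    push_cast
    ring

theorem Kk_one_left (a n : ℕ) : Kk (a+1) 0 n = (-1)^n * (a.choose n) := by
  rw [Kk, ← alt_sum a n]
  apply Finset.sum_congr rfl
  intro i _
  simp

theorem vandermonde_sym (m b : ℕ) :
    ∑ j ∈ range (m+1), ((m.choose j) * (b.choose j) : ℤ) = ((m+b).choose b : ℤ) := by
  have h := Nat.add_choose_eq m b b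
  rw [Finset.Nat.sum_antidiagonal_eq_sum_range_succ (fun p q => m.choose p * b.choose q)] at h
  have h2 : ∑ p ∈ range (b+1), m.choose p * b.choose (b - p)
      = ∑ p ∈ range (b+1), m.choose p * b.choose p := by
    apply Finset.sum_congr rfl
    intro p hp
    simp only [mem_range] at hp
    rw [Nat.choose_symm (by omega : p ≤ b)]
  rw [h2] at h
  have e1 : ∑ p ∈ range (b+1), m.choose p * b.choose p
      = ∑ p ∈ range (m+b+1), m.choose p * b.choose p := by
    apply Finset.sum_subset (Finset.range_subset_range.mpr (by omega))
    intro x _ hx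
    simp only [mem_range, not_lt] at hx
    rw [Nat.choose_eq_zero_of_lt (by omega : b < x), mul_zero]
  have e2 : ∑ p ∈ range (m+1), m.choose p * b.choose p
      = ∑ p ∈ range (m+b+1), m.choose p * b.choose p := by
    apply Finset.sum_subset (Finset.range_subset_range.mpr (by omega))
    intro x _ hx
    simp only [mem_range, not_lt] at hx
    rw [Nat.choose_eq_zero_of_lt (by omega : m < x), zero_mul]
  have : ∑ p ∈ range (m+1), m.choose p * b.choose p = (m+b).choose b := by
    rw [e2, ← e1, ← h]
  exact_mod_cast congrArg (Nat.cast : ℕ → ℤ) this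

theorem neg_one_pow_sub' (a i : ℕ) (h : i ≤ a) : (-1:ℤ)^(a-i) = (-1)^a * (-1)^i := by
  conv_rhs => rw [← Nat.sub_add_cancel h, pow_add]
  rw [mul_assoc, ← mul_pow]
  norm_num

theorem neg_one_pow_congr' (p q : ℕ) (h : p % 2 = q % 2) : (-1:ℤ)^p = (-1)^q := by
  rw [← Nat.div_add_mod p 2, ← Nat.div_add_mod q 2, h, pow_add, pow_add, pow_mul, pow_mul]
  norm_num

theorem coeff_X_sub_one_pow' (R : Type*) [CommRing R] (a i : ℕ) :
    ((X - 1 : R[X])^a).coeff i = (-1)^(a-i) * (a.choose i : R) := by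
  have hx : (X - 1 : R[X]) = X + C (-1) := by rw [map_neg, map_one, sub_eq_add_neg]
  rw [hx, coeff_X_add_C_pow]

theorem Lcoeff (a b i j : ℕ) :
    ((((X - 1 : Polynomial (Polynomial ℤ))^a * (C X - 1)^b).coeff i).coeff j)
      = ((-1:ℤ)^(a-i) * a.choose i) * ((-1:ℤ)^(b-j) * b.choose j) := by
  have h1 : ((C X - 1 : Polynomial (Polynomial ℤ)))^b = C ((X - 1 : Polynomial ℤ)^b) := by
    rw [map_pow, map_sub, map_one]
  rw [h1, coeff_mul_C, coeff_X_sub_one_pow']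
  have h2 : ((-1:Polynomial ℤ)^(a-i) * (a.choose i : Polynomial ℤ))
      = C ((-1:ℤ)^(a-i) * (a.choose i : ℤ)) := by
    rw [map_mul, map_pow, map_neg, map_one]
    norm_num
  rw [h2, coeff_C_mul, coeff_X_sub_one_pow']

theorem innerSum13 (n a b : ℕ) :
    ∑ i ∈ range (n+1), ∑ j ∈ range (n-i+1),
      (-1:ℤ)^j * ((n-i).choose j : ℤ) * (((-1:ℤ)^(a-i) * a.choose i) * ((-1:ℤ)^(b-j) * b.choose j))
    = (-1)^a * (-1)^b * Kk a b n := by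
  rw [Kk, Finset.mul_sum]
  apply Finset.sum_congr rfl
  intro i _
  have hj : ∀ j ∈ range (n-i+1),
      (-1:ℤ)^j * ((n-i).choose j : ℤ) * (((-1:ℤ)^(a-i) * a.choose i) * ((-1:ℤ)^(b-j) * b.choose j))
      = ((-1:ℤ)^(a-i) * a.choose i) * (-1)^b * (((n-i).choose j : ℤ) * (b.choose j)) := by
    intro j _
    rcases le_or_gt j b with h | h
    · have hp : (-1:ℤ)^j * (-1:ℤ)^(b-j) = (-1:ℤ)^b := by rw [← pow_add]; congr 1; omega
      calc (-1:ℤ)^j * ((n-i).choose j : ℤ) * (((-1:ℤ)^(a-i) * a.choose i) * ((-1:ℤ)^(b-j) * b.choose j))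
          = ((-1:ℤ)^j * (-1:ℤ)^(b-j)) * (((n-i).choose j : ℤ) * (((-1:ℤ)^(a-i) * a.choose i) * (b.choose j : ℤ))) := by ring
        _ = ((-1:ℤ)^(a-i) * a.choose i) * (-1)^b * (((n-i).choose j : ℤ) * (b.choose j)) := by rw [hp]; ring
    · rw [Nat.choose_eq_zero_of_lt h]; push_cast; ring
  rw [Finset.sum_congr rfl hj, ← Finset.mul_sum, vandermonde_sym (n-i) b]
  rcases le_or_gt i a with h | h
  · rw [neg_one_pow_sub' a i h]; ring
  · rw [Nat.choose_eq_zero_of_lt h]; push_cast; ring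

theorem perA (n ρ m a b : ℕ) (hρ : ρ ≤ n) (hab : (a:ℤ) - b = (ρ:ℤ) - m) :
    (-1:ℤ)^a * (-1)^b * Kk a b n
      = (-1:ℤ)^(ρ+m) * (if ρ ≤ m then ((n + (m-ρ)).choose (m-ρ) : ℤ) else 0) := by
  have hsign : (-1:ℤ)^a * (-1)^b = (-1:ℤ)^(ρ+m) := by
    rw [← pow_add]
    exact neg_one_pow_congr' _ _ (by omega)
  rw [hsign]
  rcases le_or_gt ρ m with h | h
  · obtain ⟨d, hd, rfl⟩ : ∃ d, d = m - ρ ∧ b = d + a := ⟨m - ρ, rfl, by omega⟩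
    rw [if_pos h, show Kk a (d+a) n = Kk (0+a) (d+a) n by rw [Nat.zero_add],
      Kk_shift, Kk_zero_left, ← hd]
  · obtain ⟨d, hd, rfl⟩ : ∃ d, d = ρ - m - 1 ∧ a = (d+1) + b := ⟨ρ - m - 1, rfl, by omega⟩
    rw [if_neg (by omega), show Kk (d+1+b) b n = Kk (d+1+b) (0+b) n by rw [Nat.zero_add],
      Kk_shift, Kk_one_left, Nat.choose_eq_zero_of_lt (by omega : d < n)]
    simp

theorem final_sum (n ρ : ℕ) (hρ : ρ ≤ n) :
    ∑ m ∈ range (n+1), (n.choose m : ℤ) *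
      ((-1:ℤ)^(ρ+m) * (if ρ ≤ m then ((n + (m-ρ)).choose (m-ρ) : ℤ) else 0))
    = (-1:ℤ)^(n - ρ) := by
  set f : ℕ → ℤ := fun m => (n.choose m : ℤ) *
      ((-1:ℤ)^(ρ+m) * (if ρ ≤ m then ((n + (m-ρ)).choose (m-ρ) : ℤ) else 0)) with hf
  have h1 : ∑ m ∈ range (n+1), f m = ∑ m ∈ Finset.Ico ρ (n+1), f m := by
    refine (Finset.sum_subset (by rw [Finset.range_eq_Ico]; exact Finset.Ico_subset_Ico (by omega) le_rfl) ?_).symm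
    intro x hx hx2
    simp only [Finset.mem_range] at hx
    simp only [Finset.mem_Ico, not_and, not_lt] at hx2
    have : ¬ ρ ≤ x := by by_contra hc; exact absurd (hx2 hc) (by omega)
    simp only [hf, if_neg this, mul_zero]
  rw [h1, Finset.sum_Ico_eq_sum_range]
  have h2 : ∀ k ∈ range (n + 1 - ρ), f (ρ + k)
      = (-1:ℤ)^k * (n.choose (ρ+k) : ℤ) * ((n+k).choose k : ℤ) := by
    intro k _
    simp only [hf, if_pos (Nat.le_add_right ρ k), Nat.add_sub_cancel_left]
    rw [show ρ + (ρ + k) = 2*ρ + k by ring, neg_one_pow_congr' (2*ρ+k) k (by omega)]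
    ring
  rw [Finset.sum_congr rfl h2]
  set M := n - ρ with hM
  have hn1 : n + 1 - ρ = M + 1 := by omega
  rw [hn1]
  have h3 : ∑ k ∈ range (M+1), (-1:ℤ)^k * (n.choose (ρ+k) : ℤ) * ((n+k).choose k : ℤ)
      = (-1:ℤ)^M * Kk n n M := by
    rw [Kk, Finset.mul_sum, ← Finset.sum_range_reflect]
    apply Finset.sum_congr rfl
    intro j hj
    simp only [Finset.mem_range] at hj
    have hjM : j ≤ M := by omega
    have e1 : M + 1 - 1 - j = M - j := by omega
    rw [e1]
    have e2 : ρ + (M - j) = n - j := by omega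
    have e3 : n.choose (n - j) = n.choose j := Nat.choose_symm (by omega)
    have e4 : (n + (M - j)).choose (M - j) = (M - j + n).choose n := by
      have h5 := Nat.choose_symm (Nat.le_add_left n (M - j))
      rw [Nat.add_sub_cancel] at h5
      rw [show n + (M - j) = M - j + n by omega, h5]
    rw [e2, e3, e4, neg_one_pow_sub' M j hjM]
    ring
  rw [h3, show (n:ℕ) = 0 + n from (Nat.zero_add n).symm, Kk_shift n 0 0 M, Kk_zero_left]
  simp [hM]

end Helpers

section MainProof
open Polynomial

set_option linter.unusedSectionVars false

/-- The k = n case: ∑_{i=0}^{n} ∑_{j=0}^{n-i} (-1)^j C(n-i,j) b_{i,j} = (-1)^{n - r(S)}. -/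
theorem stmt13 (S : Finset α) (r : Finset α → ℤ)
    (h0 : r ∅ = 0) (h1 : ∀ A ⊆ S, r A ≤ r S) (h2 : ∀ A ⊆ S, r A ≤ (A.card : ℤ)) :
    ∑ i ∈ Finset.range (S.card + 1), ∑ j ∈ Finset.range (S.card - i + 1),
      (-1 : ℤ) ^ j * ((S.card - i).choose j : ℤ) * (((tutte S r).coeff i).coeff j) =
      (-1 : ℤ) ^ (((S.card : ℤ) - r S).toNat) := by
  set n := S.card with hn
  have hrS0 : 0 ≤ r S := h0 ▸ h1 ∅ (Finset.empty_subset S)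
  have hrSn : r S ≤ (n : ℤ) := h2 S (le_refl S)
  set ρ := (r S).toNat with hρdef
  have hρZ : (ρ : ℤ) = r S := Int.toNat_of_nonneg hrS0
  have hρn : ρ ≤ n := by omega
  have hb : ∀ i j : ℕ, ((tutte S r).coeff i).coeff j
      = ∑ A ∈ S.powerset, ((-1:ℤ)^((r S - r A).toNat - i) * (((r S - r A).toNat.choose i : ℤ)))
          * ((-1:ℤ)^((((A.card:ℤ) - r A).toNat) - j) * ((((A.card:ℤ) - r A).toNat.choose j : ℤ))) := by
    intro i j
    rw [tutte, Polynomial.finset_sum_coeff, Polynomial.finset_sum_coeff]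
    exact Finset.sum_congr rfl fun A _ => Lcoeff _ _ i j
  have step1 : ∑ i ∈ Finset.range (n + 1), ∑ j ∈ Finset.range (n - i + 1),
      (-1 : ℤ) ^ j * ((n - i).choose j : ℤ) * (((tutte S r).coeff i).coeff j)
    = ∑ A ∈ S.powerset, ∑ i ∈ range (n+1), ∑ j ∈ range (n-i+1),
      (-1 : ℤ) ^ j * ((n - i).choose j : ℤ) *
        (((-1:ℤ)^((r S - r A).toNat - i) * (((r S - r A).toNat.choose i : ℤ)))
          * ((-1:ℤ)^((((A.card:ℤ) - r A).toNat) - j) * ((((A.card:ℤ) - r A).toNat.choose j : ℤ)))) := by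
    simp_rw [hb, Finset.mul_sum]
    rw [show (∑ i ∈ range (n+1), ∑ j ∈ range (n-i+1), ∑ A ∈ S.powerset,
        (-1 : ℤ) ^ j * ((n - i).choose j : ℤ) *
        (((-1:ℤ)^((r S - r A).toNat - i) * (((r S - r A).toNat.choose i : ℤ)))
          * ((-1:ℤ)^((((A.card:ℤ) - r A).toNat) - j) * ((((A.card:ℤ) - r A).toNat.choose j : ℤ)))))
      = ∑ i ∈ range (n+1), ∑ A ∈ S.powerset, ∑ j ∈ range (n-i+1),
        (-1 : ℤ) ^ j * ((n - i).choose j : ℤ) *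
        (((-1:ℤ)^((r S - r A).toNat - i) * (((r S - r A).toNat.choose i : ℤ)))
          * ((-1:ℤ)^((((A.card:ℤ) - r A).toNat) - j) * ((((A.card:ℤ) - r A).toNat.choose j : ℤ))))
      from Finset.sum_congr rfl fun i _ => Finset.sum_comm]
    exact Finset.sum_comm
  rw [step1]
  have step2 : ∀ A ∈ S.powerset, (∑ i ∈ range (n+1), ∑ j ∈ range (n-i+1),
      (-1 : ℤ) ^ j * ((n - i).choose j : ℤ) *
        (((-1:ℤ)^((r S - r A).toNat - i) * (((r S - r A).toNat.choose i : ℤ)))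
          * ((-1:ℤ)^((((A.card:ℤ) - r A).toNat) - j) * ((((A.card:ℤ) - r A).toNat.choose j : ℤ)))))
      = (-1:ℤ)^(ρ + A.card) *
        (if ρ ≤ A.card then ((n + (A.card - ρ)).choose (A.card - ρ) : ℤ) else 0) := by
    intro A hA
    have hAS := Finset.mem_powerset.mp hA
    have haZ : (((r S - r A).toNat : ℤ)) = r S - r A :=
      Int.toNat_of_nonneg (by have := h1 A hAS; omega)
    have hbZ : (((((A.card:ℤ) - r A).toNat) : ℤ)) = (A.card : ℤ) - r A :=
      Int.toNat_of_nonneg (by have := h2 A hAS; omega)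
    rw [innerSum13 n ((r S - r A).toNat) (((A.card:ℤ) - r A).toNat)]
    exact perA n ρ A.card ((r S - r A).toNat) (((A.card:ℤ) - r A).toNat) hρn (by omega)
  rw [Finset.sum_congr rfl step2]
  have step3 : ∑ A ∈ S.powerset, ((-1:ℤ)^(ρ + A.card) *
        (if ρ ≤ A.card then ((n + (A.card - ρ)).choose (A.card - ρ) : ℤ) else 0))
      = ∑ m ∈ range (n+1), (n.choose m : ℤ) *
        ((-1:ℤ)^(ρ+m) * (if ρ ≤ m then ((n + (m-ρ)).choose (m-ρ) : ℤ) else 0)) := by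
    rw [Finset.sum_powerset_apply_card (fun m => (-1:ℤ)^(ρ + m) *
      (if ρ ≤ m then ((n + (m - ρ)).choose (m - ρ) : ℤ) else 0))]
    simp only [nsmul_eq_mul]
    rfl
  rw [step3, final_sum n ρ hρn]
  congr 1
  omega

end MainProof
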